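/- For all integers n ≥ 0 and k ≥ 1, the determinant of the n×n matrix over ℚ with entries binom(j+k, i-j+1) for 0 ≤ j ≤ i+1 and 0 for j > i+1, 0 ≤ i, j ≤ n-1, equals C_n^{(k)} = (k/(2n+k))·binom(2n+k, n). -/

import Mathlib

open Matrix

private def Cq (j b : ℕ) : ℚ :=
  if j = 0 then 1 else (b : ℚ) / ((2 * j + b : ℕ) : ℚ) * ((2 * j + b).choose j : ℚ)

private lemma Cq_zero (b : ℕ) : Cq 0 b = 1 := by simp [Cq]

private lemma Cq_b_zero (j : ℕ) (hj : j ≠ 0) : Cq j 0 = 0 := by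
  simp [Cq, hj]

private lemma Cq_rec (j b : ℕ) : Cq (j+1) (b+1) = Cq (j+1) b + Cq j (b+2) := by
  have hX : (2*j+b+2).choose (j+1) * (j+1) = (2*j+b+2).choose j * (j+b+2) := by
    have h := Nat.choose_succ_right_eq (2*j+b+2) j
    have h2 : 2*j+b+2 - j = j+b+2 := by omega
    rw [h2] at h; exact h
  have hP : (2*j+b+3).choose (j+1) = (2*j+b+2).choose j + (2*j+b+2).choose (j+1) :=
    Nat.choose_succ_succ (2*j+b+2) j
  have hCq2 : Cq j (b+2) = ((b+2 : ℕ):ℚ) / ((2*j+b+2 : ℕ) : ℚ) * ((2*j+b+2).choose j : ℚ) := by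
    rcases Nat.eq_zero_or_pos j with h | h
    · subst h
      rw [Cq, if_pos rfl]
      norm_num
      rw [div_self (by positivity)]
    · rw [Cq, if_neg (by omega)]
      have e : 2*j+(b+2) = 2*j+b+2 := by ring
      rw [e]
  rw [Cq, if_neg (by omega), Cq, if_neg (by omega), hCq2]
  have e1 : 2*(j+1)+(b+1) = 2*j+b+3 := by ring
  have e2 : 2*(j+1)+b = 2*j+b+2 := by ring
  rw [e1, e2, hP]
  have d1 : ((2*j+b+3 : ℕ) : ℚ) ≠ 0 := by positivity
  have d2 : ((2*j+b+2 : ℕ) : ℚ) ≠ 0 := by positivity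
  have hXq : ((2*j+b+2).choose (j+1) : ℚ) * ((j:ℚ)+1) = ((2*j+b+2).choose j : ℚ) * ((j:ℚ)+(b:ℚ)+2) := by
    exact_mod_cast congrArg (Nat.cast (R := ℚ)) hX
  field_simp
  push_cast
  linear_combination (2:ℚ) * hXq

private def T (a b n : ℕ) : ℚ :=
  ∑ j ∈ Finset.range (n+1), (-1:ℚ)^(n+j) * ((j+a).choose (n-j) : ℚ) * Cq j b

private lemma T_RA (a b n : ℕ) : T (a+1) b (n+1) = T a b (n+1) - T a b n := by
  unfold T
  rw [Finset.sum_range_succ, Finset.sum_range_succ (n := n+1)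
    (f := fun j => (-1:ℚ)^(n+1+j) * ((j+a).choose (n+1-j) : ℚ) * Cq j b)]
  have hlast : ((n+1+(a+1)).choose (n+1-(n+1)) : ℚ) = ((n+1+a).choose (n+1-(n+1)) : ℚ) := by
    simp
  rw [hlast]
  have key : ∀ j ∈ Finset.range (n+1),
      (-1:ℚ)^(n+1+j) * ((j+(a+1)).choose (n+1-j) : ℚ) * Cq j b
      = (-1:ℚ)^(n+1+j) * ((j+a).choose (n+1-j) : ℚ) * Cq j b
        - (-1:ℚ)^(n+j) * ((j+a).choose (n-j) : ℚ) * Cq j b := by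
    intro j hj
    have hj' : j ≤ n := by simpa [Nat.lt_succ_iff] using hj
    have e1 : j+(a+1) = (j+a)+1 := by omega
    have e2 : n+1-j = (n-j)+1 := by omega
    have e3 : n+1+j = (n+j)+1 := by omega
    rw [e1, e2, Nat.choose_succ_succ, e3, pow_succ]
    push_cast
    ring
  rw [Finset.sum_congr rfl key, Finset.sum_sub_distrib]
  ring

private lemma T_RB (a b n : ℕ) : T a (b+1) (n+1) = T a b (n+1) + T (a+1) (b+2) n := by
  unfold T
  rw [Finset.sum_range_succ' (fun j => (-1:ℚ)^(n+1+j) * ((j+a).choose (n+1-j) : ℚ) * Cq j (b+1)),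
      Finset.sum_range_succ' (fun j => (-1:ℚ)^(n+1+j) * ((j+a).choose (n+1-j) : ℚ) * Cq j b)]
  rw [Cq_zero, Cq_zero]
  have key : ∀ j ∈ Finset.range (n+1),
      (-1:ℚ)^(n+1+(j+1)) * (((j+1)+a).choose (n+1-(j+1)) : ℚ) * Cq (j+1) (b+1)
      = (-1:ℚ)^(n+1+(j+1)) * (((j+1)+a).choose (n+1-(j+1)) : ℚ) * Cq (j+1) b
        + (-1:ℚ)^(n+j) * ((j+(a+1)).choose (n-j) : ℚ) * Cq j (b+2) := by
    intro j hj
    have e1 : n+1-(j+1) = n-j := by omega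
    have e2 : (j+1)+a = j+(a+1) := by omega
    have e3 : n+1+(j+1) = (n+j)+2 := by omega
    rw [Cq_rec, e1, e2, e3, pow_add]
    ring
  rw [Finset.sum_congr rfl key, Finset.sum_add_distrib]
  ring

private lemma T_eq : ∀ n a g, T a (a+g) n = (((g + n - 1).choose n : ℕ) : ℚ) := by
  intro n
  induction n using Nat.strong_induction_on with
  | _ n ih =>
    match n with
    | 0 =>
      intro a g
      simp [T, Cq_zero]
    | n+1 =>
      have hzero : ∀ a, T a (a+0) (n+1) = 0 := by
        intro a
        induction a with
        | zero =>
          rw [T]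
          apply Finset.sum_eq_zero
          intro j hj
          rcases Nat.eq_zero_or_pos j with h | h
          · subst h
            simp [Nat.choose_eq_zero_of_lt]
          · rw [Cq_b_zero j (by omega)]
            ring
        | succ a iha =>
          have h1 : T (a+1) (a+1) (n+1) = T a (a+1) (n+1) - T a (a+1) n := T_RA a (a+1) n
          have h2 : T a (a+1) (n+1) = T a a (n+1) + T (a+1) (a+2) n := T_RB a a n
          have h3 : T (a+1) (a+2) n = (((1 + n - 1).choose n : ℕ) : ℚ) := by
            have := ih n (by omega) (a+1) 1
            simpa using this
          have h4 : T a (a+1) n = (((1 + n - 1).choose n : ℕ) : ℚ) := by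
            have := ih n (by omega) a 1
            simpa using this
          have h5 : T a a (n+1) = 0 := by simpa using iha
          show T (a+1) ((a+1)+0) (n+1) = 0
          rw [show (a+1)+0 = a+1 from rfl, h1, h2, h5, h3, h4]
          ring
      intro a g
      induction g with
      | zero =>
        rw [hzero a]
        rw [Nat.choose_eq_zero_of_lt (by omega)]
        simp
      | succ g ihg =>
        have h1 : T a (a+(g+1)) (n+1) = T a (a+g) (n+1) + T (a+1) (a+g+2) n := by
          have := T_RB a (a+g) n
          rw [show a+(g+1) = a+g+1 from by omega] at *
          exact this
        have h2 : T (a+1) (a+g+2) n = (((g + n).choose n : ℕ) : ℚ) := by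
          have := ih n (by omega) (a+1) (g+1)
          rw [show (a+1)+(g+1) = a+g+2 from by omega] at this
          rw [this]
          congr 2
          omega
        rw [h1, ihg, h2]
        rw [show g+1+(n+1)-1 = (g+n)+1 from by omega, show g+(n+1)-1 = g+n from by omega]
        rw [Nat.choose_succ_succ (g+n) n]
        push_cast
        ring

private def Mk (k n : ℕ) : Matrix (Fin n) (Fin n) ℚ :=
  Matrix.of fun i j : Fin n =>
    if (j : ℕ) ≤ (i : ℕ) + 1 then
      (Nat.choose ((j : ℕ) + k) ((i : ℕ) + 1 - (j : ℕ)) : ℚ)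
    else 0

private lemma minor_det (k n : ℕ) (j : Fin (n+1)) :
    ((Mk k (n+1)).submatrix Fin.castSucc j.succAbove).det = (Mk k (j:ℕ)).det := by
  set m := (j : ℕ) with hm
  have hmn : m ≤ n := by omega
  have hsum : m + (n - m) = n := by omega
  let e : Fin m ⊕ Fin (n - m) ≃ Fin n := finSumFinEquiv.trans (finCongr hsum)
  have he1 : ∀ a : Fin m, ((e (Sum.inl a) : Fin n) : ℕ) = (a : ℕ) := by
    intro a; simp [e, finCongr]
  have he2 : ∀ b : Fin (n-m), ((e (Sum.inr b) : Fin n) : ℕ) = m + (b : ℕ) := by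
    intro b; simp [e, finCongr]
  have hsa_lt : ∀ q : Fin n, (q : ℕ) < m → ((j.succAbove q : Fin (n+1)) : ℕ) = (q : ℕ) := by
    intro q hq
    rw [Fin.succAbove_of_castSucc_lt _ _ (by rwa [Fin.lt_def])]
    rfl
  have hsa_ge : ∀ q : Fin n, m ≤ (q : ℕ) → ((j.succAbove q : Fin (n+1)) : ℕ) = (q : ℕ) + 1 := by
    intro q hq
    rw [Fin.succAbove_of_le_castSucc _ _ (by rwa [Fin.le_def])]
    rfl
  rw [← Matrix.det_submatrix_equiv_self e, Matrix.submatrix_submatrix]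
  set N := (Mk k (n+1)).submatrix (Fin.castSucc ∘ ⇑e) (j.succAbove ∘ ⇑e) with hN
  rw [← Matrix.fromBlocks_toBlocks N]
  have hB : N.toBlocks₁₂ = 0 := by
    ext a b
    simp only [Matrix.toBlocks₁₂, N, Matrix.submatrix_apply, Function.comp_apply, Matrix.of_apply]
    rw [Mk, Matrix.of_apply, if_neg]
    · rfl
    · rw [hsa_ge _ (by rw [he2]; omega), he2, Fin.coe_castSucc, he1]
      omega
  rw [hB, Matrix.det_fromBlocks_zero₁₂]
  have hA : N.toBlocks₁₁ = Mk k m := by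
    ext a a'
    simp only [Matrix.toBlocks₁₁, N, Matrix.submatrix_apply, Function.comp_apply, Matrix.of_apply]
    rw [Mk, Mk, Matrix.of_apply, Matrix.of_apply, Fin.coe_castSucc, he1,
      hsa_lt _ (by rw [he1]; omega), he1]
  have hD : N.toBlocks₂₂.det = 1 := by
    rw [Matrix.det_of_lowerTriangular]
    · apply Finset.prod_eq_one
      intro b _
      simp only [Matrix.toBlocks₂₂, N, Matrix.submatrix_apply, Function.comp_apply,
        Matrix.of_apply]
      rw [Mk, Matrix.of_apply, Fin.coe_castSucc, hsa_ge _ (by rw [he2]; omega), he2]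
      simp
    · intro p q hpq
      simp only [Matrix.toBlocks₂₂, N, Matrix.submatrix_apply, Function.comp_apply,
        Matrix.of_apply]
      rw [Mk, Matrix.of_apply, Fin.coe_castSucc, hsa_ge _ (by rw [he2]; omega), he2 q, he2 p,
        if_neg]
      have : (p : ℕ) < (q : ℕ) := hpq
      omega
  rw [hA, hD, mul_one]

private lemma detMk (k : ℕ) : ∀ n, (Mk k n).det = Cq n k := by
  intro n
  induction n using Nat.strong_induction_on with
  | _ n ih =>
    match n with
    | 0 =>
      rw [Cq_zero]
      exact Matrix.det_fin_zero
    | n+1 =>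
      rw [Matrix.det_succ_row (Mk k (n+1)) (Fin.last n)]
      have hstep : ∀ jj : Fin (n+1), jj ∈ Finset.univ →
          (-1:ℚ)^(((Fin.last n) : ℕ) + (jj:ℕ)) * (Mk k (n+1)) (Fin.last n) jj *
            ((Mk k (n+1)).submatrix (Fin.last n).succAbove jj.succAbove).det
          = (-1:ℚ)^(n + (jj:ℕ)) * ((((jj:ℕ)+k).choose (n+1-(jj:ℕ))) : ℚ) * Cq (jj:ℕ) k := by
        intro jj _
        rw [Fin.succAbove_last, minor_det, ih (jj:ℕ) (by omega), Fin.val_last]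
        congr 2
        have hjj : (jj:ℕ) < n+1 := jj.isLt
        rw [Mk, Matrix.of_apply, Fin.val_last, if_pos (by omega)]
      rw [Finset.sum_congr rfl hstep,
        Fin.sum_univ_eq_sum_range
          (fun j => (-1:ℚ)^(n+j) * (((j+k).choose (n+1-j)) : ℚ) * Cq j k) (n+1)]
      have hT := T_eq (n+1) k 0
      rw [Nat.add_zero, Nat.choose_eq_zero_of_lt (by omega), Nat.cast_zero, T,
        Finset.sum_range_succ] at hT
      have hlast : (-1:ℚ)^((n+1)+(n+1)) * (((n+1+k).choose (n+1-(n+1))) : ℚ) * Cq (n+1) k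
          = Cq (n+1) k := by
        rw [show (n+1)+(n+1) = 2*(n+1) from by ring, pow_mul]
        norm_num
      rw [hlast] at hT
      have flip : ∀ j ∈ Finset.range (n+1),
          (-1:ℚ)^(n+j) * (((j+k).choose (n+1-j)) : ℚ) * Cq j k
          = -((-1:ℚ)^(n+1+j) * (((j+k).choose (n+1-j)) : ℚ) * Cq j k) := by
        intro j hj
        rw [show n+1+j = (n+j)+1 from by omega, pow_succ]
        ring
      rw [Finset.sum_congr rfl flip, Finset.sum_neg_distrib]
      linarith [hT]

theorem stmt_5 (n k : ℕ) (hk : 1 ≤ k) :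
    Matrix.det (Matrix.of fun i j : Fin n =>
        if (j : ℕ) ≤ (i : ℕ) + 1 then
          (Nat.choose ((j : ℕ) + k) ((i : ℕ) + 1 - (j : ℕ)) : ℚ)
        else 0)
      = ((k : ℚ) / ((2 * n + k : ℕ) : ℚ)) * (Nat.choose (2 * n + k) n : ℚ) := by
  have h1 : (Mk k n).det = Cq n k := detMk k n
  have h2 : Cq n k = ((k : ℚ) / ((2 * n + k : ℕ) : ℚ)) * (Nat.choose (2 * n + k) n : ℚ) := by
    rcases Nat.eq_zero_or_pos n with h | h
    · subst h
      rw [Cq_zero, show 2*0+k = k from by omega, Nat.choose_zero_right, Nat.cast_one, mul_one,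
        div_self (Nat.cast_ne_zero.mpr (by omega))]
    · rw [Cq, if_neg (by omega)]
  rw [← h2, ← h1]
  rfl
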